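/- Fix a > 0 and an integer j ≥ 0. Let S ⊆ ℤ be a finite set and let b : ℤ → ℝ satisfy |b_k| ≤ 1 for all k. Define α_1(ξ) = 2^{−j/2} (f_ε^*)'(ξ) ψ^*(ξ 2^{−j}) Σ_{k∈S} b_k e^{iξ k 2^{−j}}, where (f_ε^*)'(ξ) = cos(aξ)/ξ − sin(aξ)/(aξ²) is the derivative of the Fourier transform of the uniform density on [−a,a]. Then ∫_ℝ |α_1(ξ)|² dξ ≤ 24π c_ψ² 2^{−2j} |S|. -/

import Mathlib

set_option maxHeartbeats 1000000
open MeasureTheory Real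

lemma cos_period_int (r c : ℝ) (hr : 0 < r) (m : ℤ) (hm : m ≠ 0) :
    ∫ ξ in c..(c + 2*π/r), Real.cos (ξ * m * r) = 0 := by
  have hmr : (m : ℝ) * r ≠ 0 :=
    mul_ne_zero (Int.cast_ne_zero.mpr hm) hr.ne'
  have h1 : ∀ ξ : ℝ, ξ * (m:ℝ) * r = ((m:ℝ)*r) * ξ := fun ξ => by ring
  simp only [h1]
  rw [show (∫ ξ in c..(c + 2*π/r), Real.cos (((m:ℝ)*r) * ξ))
      = ((m:ℝ)*r)⁻¹ • ∫ x in ((m:ℝ)*r) * c..((m:ℝ)*r) * (c + 2*π/r), Real.cos x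
      from intervalIntegral.integral_comp_mul_left (fun x => Real.cos x) hmr]
  rw [integral_cos]
  have h2 : ((m:ℝ)*r) * (c + 2*π/r) = ((m:ℝ)*r) * c + m * (2*π) := by
    field_simp
  rw [h2, Real.sin_add_int_mul_two_pi]
  simp

lemma re_mul_expI (c t : ℝ) : ((c:ℂ) * Complex.exp ((t:ℂ) * Complex.I)).re = c * Real.cos t := by
  simp [Complex.exp_mul_I, Complex.add_re, Complex.mul_re, Complex.cos_ofReal_re]

lemma normsq_expand (r : ℝ) (S : Finset ℤ) (b : ℤ → ℝ) (ξ : ℝ) :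
    ‖∑ k ∈ S, ((b k : ℝ):ℂ) * Complex.exp (Complex.I * ξ * ((k:ℝ):ℂ) * r)‖^2
      = ∑ k ∈ S, ∑ l ∈ S, b k * b l * Real.cos (ξ * ((k:ℝ) - l) * r) := by
  have expand : (∑ k ∈ S, ((b k : ℝ):ℂ) * Complex.exp (Complex.I * ξ * ((k:ℝ):ℂ) * r)) *
      (starRingEnd ℂ) (∑ l ∈ S, ((b l : ℝ):ℂ) * Complex.exp (Complex.I * ξ * ((l:ℝ):ℂ) * r))
      = ∑ k ∈ S, ∑ l ∈ S, ((b k * b l : ℝ):ℂ) * Complex.exp ((↑(ξ * ((k:ℝ) - l) * r) : ℂ) * Complex.I) := by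
    rw [map_sum, Finset.sum_mul_sum]
    refine Finset.sum_congr rfl fun k _ => Finset.sum_congr rfl fun l _ => ?_
    rw [map_mul, Complex.conj_ofReal, ← Complex.exp_conj]
    rw [mul_mul_mul_comm, ← Complex.ofReal_mul, ← Complex.exp_add]
    congr 1
    simp only [map_mul, Complex.conj_I, Complex.conj_ofReal, map_intCast]
    push_cast
    ring
  have h2 : (‖∑ k ∈ S, ((b k : ℝ):ℂ) * Complex.exp (Complex.I * ξ * ((k:ℝ):ℂ) * r)‖:ℝ)^2
      = ((∑ k ∈ S, ((b k : ℝ):ℂ) * Complex.exp (Complex.I * ξ * ((k:ℝ):ℂ) * r)) *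
      (starRingEnd ℂ) (∑ l ∈ S, ((b l : ℝ):ℂ) * Complex.exp (Complex.I * ξ * ((l:ℝ):ℂ) * r))).re := by
    rw [Complex.mul_conj]
    simp [Complex.sq_norm]
  rw [h2, expand, Complex.re_sum]
  refine Finset.sum_congr rfl fun k _ => ?_
  rw [Complex.re_sum]
  refine Finset.sum_congr rfl fun l _ => ?_
  rw [re_mul_expI]

lemma ortho (r c : ℝ) (hr : 0 < r) (S : Finset ℤ) (b : ℤ → ℝ) :
    (∫ ξ in c..(c + 2*π/r), ‖∑ k ∈ S, ((b k : ℝ):ℂ) * Complex.exp (Complex.I * ξ * ((k:ℝ):ℂ) * r)‖^2)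
      = (2*π/r) * ∑ k ∈ S, (b k)^2 := by
  simp only [normsq_expand]
  rw [intervalIntegral.integral_finset_sum]
  · have inner : ∀ k ∈ S, (∫ ξ in c..(c + 2*π/r), ∑ l ∈ S, b k * b l * Real.cos (ξ * ((k:ℝ) - l) * r))
        = (2*π/r) * (b k)^2 := by
      intro k hk
      rw [intervalIntegral.integral_finset_sum]
      · have term : ∀ l ∈ S, (∫ ξ in c..(c + 2*π/r), b k * b l * Real.cos (ξ * ((k:ℝ) - l) * r))
            = if l = k then (2*π/r) * (b k)^2 else 0 := by
          intro l hl
          by_cases hkl : l = k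
          · subst hkl
            rw [if_pos rfl]
            simp only [sub_self, mul_zero, zero_mul, Real.cos_zero, mul_one]
            rw [intervalIntegral.integral_const, smul_eq_mul]
            ring
          · rw [if_neg hkl]
            have hm : ((k:ℝ) - l) = ((k - l : ℤ) : ℝ) := by push_cast; ring
            simp only [hm]
            rw [intervalIntegral.integral_const_mul, cos_period_int r c hr (k - l) (by omega)]
            ring
        rw [Finset.sum_congr rfl term, Finset.sum_ite_eq' S k (fun _ => (2*π/r) * (b k)^2),
          if_pos hk]
      · intro l _
        exact (Continuous.intervalIntegrable (by continuity) _ _)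
    rw [Finset.sum_congr rfl inner, Finset.mul_sum]
  · intro k _
    exact (Continuous.intervalIntegrable (by continuity) _ _)

/-- For `a > 0`, `j ∈ ℕ`, a finite `S ⊆ ℤ` and coefficients `|b_k| ≤ 1`, the function
`α₁(ξ) = 2^{−j/2} (f_ε^*)'(ξ) ψ^*(ξ 2^{−j}) Σ_{k∈S} b_k e^{iξk2^{−j}}`, where
`(f_ε^*)'(ξ) = cos(aξ)/ξ − sin(aξ)/(aξ²)`, satisfies
`∫ |α₁(ξ)|² dξ ≤ 24π c_ψ² 2^{−2j} |S|`. -/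
theorem stmt_19 (a cψ : ℝ) (ha : 0 < a) (hcψ : 0 < cψ)
    (ψ : ℝ → ℝ) (hψ1 : Integrable ψ) (hψ2 : MemLp ψ 2)
    (ψs : ℝ → ℂ)
    (hψs : ∀ ξ : ℝ, ψs ξ = ∫ x : ℝ, Complex.exp (Complex.I * x * ξ) * (ψ x : ℂ))
    (hb1 : ∀ ξ : ℝ, ‖ψs ξ‖ ≤ cψ)
    (hb2 : ∀ ξ : ℝ,
      ξ ∉ Set.Icc (-(8 * π / 3)) (-(2 * π / 3)) ∪ Set.Icc (2 * π / 3) (8 * π / 3) →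
        ψs ξ = 0)
    (j : ℕ) (S : Finset ℤ) (b : ℤ → ℝ) (hb : ∀ k, |b k| ≤ 1)
    (α₁ : ℝ → ℂ)
    (hα₁ : ∀ ξ : ℝ, α₁ ξ =
      (((2 : ℝ) ^ (-(j : ℝ) / 2) : ℝ) : ℂ) *
        ((Real.cos (a * ξ) / ξ - Real.sin (a * ξ) / (a * ξ ^ 2) : ℝ) : ℂ) *
        ψs (ξ * (2 : ℝ) ^ (-(j : ℝ))) *
        ∑ k ∈ S, ((b k : ℝ) : ℂ) *
          Complex.exp (Complex.I * ξ * (k : ℝ) * ((2 : ℝ) ^ (-(j : ℝ)) : ℝ))) :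
    (∫ ξ : ℝ, ‖α₁ ξ‖ ^ 2) ≤ 24 * π * cψ ^ 2 * (2 : ℝ) ^ (-(2 * (j : ℝ))) * S.card := by
  have hπ : 0 < π := pi_pos
  set r : ℝ := (2:ℝ) ^ (-(j:ℝ)) with hrdef
  have hr : 0 < r := rpow_pos_of_pos two_pos _
  set x : ℝ := (2:ℝ) ^ (-(j:ℝ)/2) with hxdef
  have hx : 0 < x := rpow_pos_of_pos two_pos _
  have hsq : x^2 = r := by
    rw [hxdef, hrdef, ← Real.rpow_natCast ((2:ℝ)^(-(j:ℝ)/2)) 2,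
      ← Real.rpow_mul (by norm_num : (0:ℝ) ≤ 2)]
    norm_num
  set g : ℝ → ℂ := fun ξ => ∑ k ∈ S, ((b k:ℝ):ℂ) * Complex.exp (Complex.I * ξ * ((k:ℝ):ℂ) * (r:ℂ)) with hgdef
  have hgc : Continuous g := by
    apply continuous_finset_sum
    intro k _
    exact continuous_const.mul (Complex.continuous_exp.comp (by continuity))
  set C : ℝ := r^3 * 9 / π^2 * cψ^2 with hCdef
  have hC : 0 ≤ C := by positivity
  set E₁ : Set ℝ := Set.Icc ((-(8*π/3))/r) ((-(2*π/3))/r) with hE1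
  set E₂ : Set ℝ := Set.Icc ((2*π/3)/r) ((8*π/3)/r) with hE2
  have hmem : ∀ u v ξ : ℝ, ξ ∈ Set.Icc (u/r) (v/r) ↔ ξ * r ∈ Set.Icc u v := by
    intro u v ξ
    simp [Set.mem_Icc, div_le_iff₀ hr, le_div_iff₀ hr]
  have hCsq : x^2 * (3*r/π)^2 * cψ^2 = C := by
    rw [hsq, hCdef]
    field_simp
    ring
  -- pointwise bound
  have hpt : ∀ ξ : ℝ, ‖α₁ ξ‖^2 ≤ (E₁ ∪ E₂).indicator (fun ξ => C * ‖g ξ‖^2) ξ := by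
    intro ξ
    by_cases hξ : ξ ∈ E₁ ∪ E₂
    · rw [Set.indicator_of_mem hξ]
      have habs : (2*π/3)/r ≤ |ξ| := by
        rcases hξ with h | h
        · rw [hE1, Set.mem_Icc] at h
          have h2 : ξ ≤ (-(2*π/3))/r := h.2
          have h3 : (-(2*π/3))/r = -((2*π/3)/r) := by ring
          rw [h3] at h2
          calc (2*π/3)/r ≤ -ξ := by linarith
            _ ≤ |ξ| := neg_le_abs ξ
        · rw [hE2, Set.mem_Icc] at h
          calc (2*π/3)/r ≤ ξ := h.1
            _ ≤ |ξ| := le_abs_self ξ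
      have habs0 : 0 < |ξ| := lt_of_lt_of_le (by positivity) habs
      -- bound on the derivative factor
      have hd : |Real.cos (a*ξ) / ξ - Real.sin (a*ξ) / (a*ξ^2)| ≤ 3*r/π := by
        have h1 : |Real.cos (a*ξ) / ξ| ≤ 1/|ξ| := by
          rw [abs_div]
          gcongr
          exact Real.abs_cos_le_one _
        have hξ0 : ξ ≠ 0 := by
          intro h0
          rw [h0, abs_zero] at habs0
          exact lt_irrefl _ habs0
        have h2 : |Real.sin (a*ξ) / (a*ξ^2)| ≤ 1/|ξ| := by
          rw [abs_div]
          have hden : |a*ξ^2| = a * ξ^2 := abs_of_pos (by positivity)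
          rw [hden]
          have hnum : |Real.sin (a*ξ)| ≤ a * |ξ| := by
            have := Real.abs_sin_le_abs (x := a*ξ)
            rwa [abs_mul, abs_of_pos ha] at this
          rw [div_le_div_iff₀ (by positivity) habs0]
          calc |Real.sin (a*ξ)| * |ξ| ≤ (a * |ξ|) * |ξ| := by
                exact mul_le_mul_of_nonneg_right hnum (abs_nonneg _)
            _ = a * |ξ|^2 := by ring
            _ = 1 * (a * ξ^2) := by rw [sq_abs]; ring
        have h3 : 1/|ξ| ≤ 1/((2*π/3)/r) := by
          exact one_div_le_one_div_of_le (by positivity) habs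
        have h4 : (1:ℝ)/((2*π/3)/r) = 3*r/(2*π) := by
          field_simp
        calc |Real.cos (a*ξ) / ξ - Real.sin (a*ξ) / (a*ξ^2)|
            ≤ |Real.cos (a*ξ) / ξ| + |Real.sin (a*ξ) / (a*ξ^2)| := abs_sub _ _
          _ ≤ 1/|ξ| + 1/|ξ| := add_le_add h1 h2
          _ ≤ 3*r/(2*π) + 3*r/(2*π) := by rw [← h4]; exact add_le_add h3 h3
          _ = 3*r/π := by field_simp; ring
      have hle : ‖α₁ ξ‖ ≤ x * (3*r/π) * cψ * ‖g ξ‖ := by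
        rw [hα₁ ξ]
        have hform : ‖((x:ℝ):ℂ) * ((Real.cos (a*ξ)/ξ - Real.sin (a*ξ)/(a*ξ^2) : ℝ):ℂ) *
            ψs (ξ * r) * g ξ‖
            = x * |Real.cos (a*ξ)/ξ - Real.sin (a*ξ)/(a*ξ^2)| * ‖ψs (ξ*r)‖ * ‖g ξ‖ := by
          rw [norm_mul, norm_mul, norm_mul, Complex.norm_real, Complex.norm_real,
            Real.norm_eq_abs, Real.norm_eq_abs, abs_of_pos hx]
        rw [hform]
        gcongr
        exact hb1 _
      calc ‖α₁ ξ‖^2 ≤ (x * (3*r/π) * cψ * ‖g ξ‖)^2 := by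
            apply pow_le_pow_left₀ (norm_nonneg _) hle
        _ = C * ‖g ξ‖^2 := by rw [mul_pow, mul_pow, mul_pow, hCsq]
    · rw [Set.indicator_of_notMem hξ]
      have hz : ψs (ξ * r) = 0 := by
        apply hb2
        intro hmem2
        apply hξ
        rcases hmem2 with h | h
        · exact Or.inl ((hmem _ _ ξ).2 h)
        · exact Or.inr ((hmem _ _ ξ).2 h)
      rw [hα₁ ξ, hz]
      simp
  -- integrability of the dominating function
  have hmeasE : MeasurableSet (E₁ ∪ E₂) := (measurableSet_Icc.union measurableSet_Icc)
  have hcont : Continuous (fun ξ => C * ‖g ξ‖^2) := continuous_const.mul (hgc.norm.pow 2)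
  have hint1 : IntegrableOn (fun ξ => C * ‖g ξ‖^2) E₁ := hcont.integrableOn_Icc
  have hint2 : IntegrableOn (fun ξ => C * ‖g ξ‖^2) E₂ := hcont.integrableOn_Icc
  have hind : Integrable ((E₁ ∪ E₂).indicator (fun ξ => C * ‖g ξ‖^2)) :=
    (hint1.union hint2).integrable_indicator hmeasE
  have hmono : (∫ ξ : ℝ, ‖α₁ ξ‖ ^ 2) ≤ ∫ ξ, (E₁ ∪ E₂).indicator (fun ξ => C * ‖g ξ‖^2) ξ :=
    integral_mono_of_nonneg (ae_of_all _ fun ξ => sq_nonneg _) hind (ae_of_all _ hpt)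
  -- compute the integral of the dominating function
  have hdisj : Disjoint E₁ E₂ := by
    rw [Set.disjoint_left]
    intro ξ h1 h2
    rw [hE1, Set.mem_Icc] at h1
    rw [hE2, Set.mem_Icc] at h2
    have hp : 0 < (2*π/3)/r := by positivity
    have hneg : (-(2*π/3))/r = -((2*π/3)/r) := by ring
    linarith [h1.2, h2.1]
  have hIcc : ∀ u v : ℝ, u ≤ v → ∫ ξ in Set.Icc u v, C * ‖g ξ‖^2 = ∫ ξ in u..v, C * ‖g ξ‖^2 := by
    intro u v huv
    rw [integral_Icc_eq_integral_Ioc, intervalIntegral.integral_of_le huv]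
  have hval : ∀ u : ℝ, (∫ ξ in u..(u + 2*π/r), C * ‖g ξ‖^2) = C * ((2*π/r) * ∑ k ∈ S, (b k)^2) := by
    intro u
    rw [intervalIntegral.integral_const_mul, ortho r u hr S b]
  have hBnn : 0 ≤ ∑ k ∈ S, (b k)^2 := Finset.sum_nonneg fun k _ => sq_nonneg _
  have hBle : ∑ k ∈ S, (b k)^2 ≤ (S.card : ℝ) := by
    calc ∑ k ∈ S, (b k)^2 ≤ ∑ k ∈ S, 1 := by
          apply Finset.sum_le_sum
          intro k _
          have := hb k
          nlinarith [abs_nonneg (b k), sq_abs (b k)]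
      _ = (S.card : ℝ) := by simp
  have hv1 : (-(2*π/3))/r = (-(8*π/3))/r + 2*π/r := by field_simp; ring
  have hv2 : (8*π/3)/r = (2*π/3)/r + 2*π/r := by field_simp; ring
  have hu1le : (-(8*π/3))/r ≤ (-(2*π/3))/r := by
    rw [div_le_div_iff₀ hr hr]
    nlinarith
  have hu2le : (2*π/3)/r ≤ (8*π/3)/r := by
    rw [div_le_div_iff₀ hr hr]
    nlinarith
  have hsplit : (∫ ξ, (E₁ ∪ E₂).indicator (fun ξ => C * ‖g ξ‖^2) ξ)
      = (∫ ξ in E₁, C * ‖g ξ‖^2) + (∫ ξ in E₂, C * ‖g ξ‖^2) := by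
    rw [integral_indicator hmeasE, setIntegral_union hdisj measurableSet_Icc hint1 hint2]
  have hE1val : (∫ ξ in E₁, C * ‖g ξ‖^2) = C * ((2*π/r) * ∑ k ∈ S, (b k)^2) := by
    rw [hE1, hIcc _ _ hu1le, hv1, hval]
  have hE2val : (∫ ξ in E₂, C * ‖g ξ‖^2) = C * ((2*π/r) * ∑ k ∈ S, (b k)^2) := by
    rw [hE2, hIcc _ _ hu2le, hv2, hval]
  have hr2 : (2:ℝ)^(-(2*(j:ℝ))) = r^2 := by
    rw [hrdef, ← Real.rpow_natCast ((2:ℝ)^(-(j:ℝ))) 2,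
      ← Real.rpow_mul (by norm_num : (0:ℝ) ≤ 2)]
    norm_num
    ring_nf
  rw [hr2]
  refine hmono.trans ?_
  rw [hsplit, hE1val, hE2val]
  have hsum : C * ((2*π/r) * ∑ k ∈ S, (b k)^2) + C * ((2*π/r) * ∑ k ∈ S, (b k)^2)
      = (36*r^2*cψ^2/π) * ∑ k ∈ S, (b k)^2 := by
    rw [hCdef]
    field_simp
    ring
  rw [hsum]
  calc (36*r^2*cψ^2/π) * ∑ k ∈ S, (b k)^2 ≤ (36*r^2*cψ^2/π) * (S.card : ℝ) := by
        apply mul_le_mul_of_nonneg_left hBle (by positivity)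
    _ ≤ 24*π*cψ^2*r^2*(S.card : ℝ) := by
        apply mul_le_mul_of_nonneg_right ?_ (Nat.cast_nonneg _)
        rw [div_le_iff₀ hπ]
        have hπ2 : 9 < π^2 := by nlinarith [pi_gt_three]
        nlinarith [hπ2, mul_nonneg (sq_nonneg r) (sq_nonneg cψ)]
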